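/- Margulis–Russo formula: For every n ∈ ℕ, every increasing boolean function f : {0,1}^n → {0,1}, and every p ∈ (0,1), the function p ↦ 𝔼_p[f] is differentiable and its derivative at p equals the sum of the influences: (d/dp) 𝔼_p[f] = Σ_{i=1}^n Inf_i[f], where the influences are computed under ℙ_p. -/

import Mathlib

open scoped Classical

section BooleanAnalysis

variable {ι : Type*} [Fintype ι] [DecidableEq ι]

/-- The Bernoulli(`p`) product weight of a configuration `ω ∈ {0,1}^ι`:
`∏ i, p^{ω i}(1-p)^{1-ω i}`.  Summing a function against these weights gives its
expectation under the product measure `ℙ_p`. -/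
noncomputable def bernoulliWeight (p : ℝ) (ω : ι → Bool) : ℝ :=
  ∏ i : ι, if ω i then p else 1 - p

/-- Expectation `𝔼_p[g]` of `g : {0,1}^ι → ℝ` under the product Bernoulli(`p`) measure. -/
noncomputable def bernoulliExp (p : ℝ) (g : (ι → Bool) → ℝ) : ℝ :=
  ∑ ω : ι → Bool, bernoulliWeight p ω * g ω

/-- The `{0,1}`-valued (real) indicator of a boolean function. -/
noncomputable def boolInd (f : (ι → Bool) → Bool) (ω : ι → Bool) : ℝ :=
  if f ω then 1 else 0

/-- `f(p) := 𝔼_p[f]` for a boolean function `f`. -/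
noncomputable def bernoulliMean (p : ℝ) (f : (ι → Bool) → Bool) : ℝ :=
  bernoulliExp p (boolInd f)

/-- The variance `Var_p(f)` of a boolean function under `ℙ_p`. -/
noncomputable def bernoulliVar (p : ℝ) (f : (ι → Bool) → Bool) : ℝ :=
  bernoulliExp p (fun ω => (boolInd f ω - bernoulliMean p f) ^ 2)

/-- `Flip_i(ω)`: flip the `i`-th coordinate of `ω`. -/
def flipCoord (i : ι) (ω : ι → Bool) : ι → Bool :=
  Function.update ω i (!ω i)

/-- The influence `Inf_i[f] := 𝔼_p[|f(ω) - f(Flip_i ω)|]` of coordinate `i`, under `ℙ_p`. -/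
noncomputable def influence (p : ℝ) (f : (ι → Bool) → Bool) (i : ι) : ℝ :=
  bernoulliExp p (fun ω => |boolInd f ω - boolInd f (flipCoord i ω)|)

/-- A boolean function is increasing if it is monotone w.r.t. the coordinatewise
partial order on `{0,1}^ι` (with `false ≤ true`). -/
def IncreasingBoolFun (f : (ι → Bool) → Bool) : Prop :=
  ∀ ω ω' : ι → Bool, (∀ i, ω i ≤ ω' i) → f ω ≤ f ω'

end BooleanAnalysis

section AuxMR
variable {ι : Type*} [Fintype ι] [DecidableEq ι]

lemma flipCoord_involutive (i : ι) : Function.Involutive (flipCoord i) := by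
  intro ω
  funext j
  by_cases h : j = i
  · subst h; simp [flipCoord]
  · simp [flipCoord, Function.update_of_ne h]

lemma flipCoord_apply_self (i : ι) (ω : ι → Bool) : flipCoord i ω i = !ω i := by
  simp [flipCoord]

lemma flipCoord_apply_ne (i j : ι) (ω : ι → Bool) (h : j ≠ i) : flipCoord i ω j = ω j := by
  simp [flipCoord, Function.update_of_ne h]

lemma sum_flip (i : ι) (G : (ι → Bool) → ℝ) :
    ∑ ω : ι → Bool, G (flipCoord i ω) = ∑ ω : ι → Bool, G ω :=
  Fintype.sum_equiv ((flipCoord_involutive i).toPerm) _ _ (fun _ => rfl)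

end AuxMR

/-- **Margulis–Russo formula.** -/
theorem margulis_russo (n : ℕ) (f : (Fin n → Bool) → Bool) (hf : IncreasingBoolFun f)
    (p : ℝ) (hp : p ∈ Set.Ioo (0 : ℝ) 1) :
    HasDerivAt (fun q : ℝ => bernoulliMean q f) (∑ i : Fin n, influence p f i) p := by
  classical
  -- notation
  set R : Fin n → (Fin n → Bool) → ℝ :=
    fun i ω => ∏ j ∈ Finset.univ.erase i, (if ω j then p else 1 - p) with hR
  set s : Fin n → (Fin n → Bool) → ℝ := fun i ω => if ω i then 1 else -1 with hs
  -- Step 1: the analytic derivative.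
  have h1 : HasDerivAt (fun q : ℝ => bernoulliMean q f)
      (∑ ω : Fin n → Bool, (∑ i : Fin n, R i ω * s i ω) * boolInd f ω) p := by
    have : (fun q : ℝ => bernoulliMean q f)
        = fun q : ℝ => ∑ ω : Fin n → Bool, bernoulliWeight q ω * boolInd f ω := rfl
    rw [this]
    apply HasDerivAt.fun_sum
    intro ω _
    have hw : HasDerivAt (fun q : ℝ => bernoulliWeight q ω) (∑ i : Fin n, R i ω * s i ω) p := by
      have hprod := HasDerivAt.fun_finsetProd (u := (Finset.univ : Finset (Fin n)))
        (f := fun i q => if ω i then q else 1 - q)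
        (f' := fun i => if ω i then (1 : ℝ) else -1) (x := p) ?_
      · convert hprod using 2 <;> rfl
      · intro i _
        by_cases h : ω i
        · simpa [h] using (hasDerivAt_id' (x := p))
        · simpa [h] using ((hasDerivAt_const p (1:ℝ)).fun_sub (hasDerivAt_id' (x := p)))
    exact hw.mul_const _
  -- Step 2: identify the derivative with the sum of influences.
  have h2 : (∑ ω : Fin n → Bool, (∑ i : Fin n, R i ω * s i ω) * boolInd f ω)
      = ∑ i : Fin n, influence p f i := by
    have hswap : (∑ ω : Fin n → Bool, (∑ i : Fin n, R i ω * s i ω) * boolInd f ω)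
        = ∑ i : Fin n, ∑ ω : Fin n → Bool, R i ω * s i ω * boolInd f ω := by
      rw [Finset.sum_comm]
      simp [Finset.sum_mul]
    rw [hswap]
    refine Finset.sum_congr rfl fun i _ => ?_
    -- basic facts about flipping
    have hRflip : ∀ ω, R i (flipCoord i ω) = R i ω := by
      intro ω
      refine Finset.prod_congr rfl fun j hj => ?_
      rw [flipCoord_apply_ne i j ω (Finset.mem_erase.1 hj).1]
    have hsflip : ∀ ω, s i (flipCoord i ω) = -(s i ω) := by
      intro ω
      simp only [hs, flipCoord_apply_self]
      by_cases h : ω i <;> simp [h]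
    -- the sign identity, using monotonicity
    have hsign : ∀ ω : Fin n → Bool,
        s i ω * (boolInd f ω - boolInd f (flipCoord i ω))
          = |boolInd f ω - boolInd f (flipCoord i ω)| := by
      intro ω
      by_cases h : ω i
      · have hle : f (flipCoord i ω) ≤ f ω := by
          apply hf
          intro j
          by_cases hj : j = i
          · subst hj; simp [flipCoord_apply_self, h]
          · rw [flipCoord_apply_ne i j ω hj]
        by_cases h1 : f ω <;> by_cases h2 : f (flipCoord i ω)
        · simp [boolInd, h1, h2]
        · simp [boolInd, h1, h2, hs, h]
        · exfalso; simp [h1, h2] at hle; exact absurd hle (by decide)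
        · simp [boolInd, h1, h2]
      · have hle : f ω ≤ f (flipCoord i ω) := by
          apply hf
          intro j
          by_cases hj : j = i
          · subst hj; simp [flipCoord_apply_self, h]
          · rw [flipCoord_apply_ne i j ω hj]
        by_cases h1 : f ω <;> by_cases h2 : f (flipCoord i ω)
        · simp [boolInd, h1, h2]
        · exfalso; simp [h1, h2] at hle; exact absurd hle (by decide)
        · simp [boolInd, h1, h2, hs, h]
        · simp [boolInd, h1, h2]
    -- weight splitting: w ω + w (flip ω) = R i ω
    have hwsplit : ∀ ω : Fin n → Bool,
        bernoulliWeight p ω + bernoulliWeight p (flipCoord i ω) = R i ω := by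
      intro ω
      have e1 : bernoulliWeight p ω = (if ω i then p else 1 - p) * R i ω := by
        rw [bernoulliWeight, ← Finset.mul_prod_erase _ _ (Finset.mem_univ i)]
      have e2 : bernoulliWeight p (flipCoord i ω)
          = (if ω i then 1 - p else p) * R i ω := by
        have hrest : (∏ j ∈ Finset.univ.erase i, if flipCoord i ω j then p else 1 - p)
            = R i ω := hRflip ω
        rw [bernoulliWeight, ← Finset.mul_prod_erase _ _ (Finset.mem_univ i), hrest,
          flipCoord_apply_self]
        by_cases h : ω i <;> simp [h]
      rw [e1, e2]
      by_cases h : ω i <;> simp [h] <;> ring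
    -- Now the doubling argument
    set T := ∑ ω : Fin n → Bool, R i ω * s i ω * boolInd f ω with hT
    have hT2 : T + T = ∑ ω : Fin n → Bool,
        R i ω * |boolInd f ω - boolInd f (flipCoord i ω)| := by
      conv_lhs => rw [hT]
      nth_rewrite 2 [← sum_flip i (fun ω => R i ω * s i ω * boolInd f ω)]
      rw [← Finset.sum_add_distrib]
      refine Finset.sum_congr rfl fun ω _ => ?_
      rw [hRflip, hsflip, ← hsign ω]
      ring
    have hI2 : influence p f i + influence p f i = ∑ ω : Fin n → Bool,
        R i ω * |boolInd f ω - boolInd f (flipCoord i ω)| := by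
      have : influence p f i = ∑ ω : Fin n → Bool,
          bernoulliWeight p (flipCoord i ω) * |boolInd f ω - boolInd f (flipCoord i ω)| := by
        rw [influence, bernoulliExp]
        nth_rewrite 1 [← sum_flip i (fun ω =>
          bernoulliWeight p ω * |boolInd f ω - boolInd f (flipCoord i ω)|)]
        refine Finset.sum_congr rfl fun ω _ => ?_
        rw [(flipCoord_involutive i) ω, abs_sub_comm]
      nth_rewrite 2 [this]
      rw [influence, bernoulliExp, ← Finset.sum_add_distrib]
      refine Finset.sum_congr rfl fun ω _ => ?_
      rw [← add_mul, hwsplit]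
    have : T + T = influence p f i + influence p f i := by rw [hT2, hI2]
    linarith
  rw [← h2]
  exact h1
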